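/- arXiv:2204.07578 — 7 statements merged into one kernel-verified Lean document; each statement's English description precedes it below -/
import Mathlib

section
/- Let S₁ ⊆ S₂ be multiplicatively closed subsets of h(R) such that for every s ∈ S₂ there exists r ∈ S₂ with sr ∈ S₁, and let P be a graded submodule of M with (P :_R M) ∩ S₂ = ∅. If P is a graded classical S₂-primary submodule of M, then P is a graded classical S₁-primary submodule of M. -/
variable {G : Type*} [AddCommGroup G] [DecidableEq G]
variable {R : Type*} [CommRing R] (𝒜 : G → AddSubmonoid R) [GradedRing 𝒜]
variable {M : Type*} [AddCommGroup M] [Module R M]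
variable (ℳ : G → AddSubmonoid M) [SetLike.GradedSMul 𝒜 ℳ] [DirectSum.Decomposition ℳ]

/-- `P` is a graded submodule of the graded module `M`. -/
def IsGradedSubmodule (P : Submodule R M) : Prop :=
  ∀ m ∈ P, ∀ g : G, (DirectSum.decompose ℳ m g : M) ∈ P

/-- `P` is a graded classical primary submodule of `M`. -/
def IsGrClPrimary (P : Submodule R M) : Prop :=
  IsGradedSubmodule ℳ P ∧ P ≠ ⊤ ∧
    ∀ x y : R, ∀ m : M, SetLike.IsHomogeneousElem 𝒜 x → SetLike.IsHomogeneousElem 𝒜 y →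
      SetLike.IsHomogeneousElem ℳ m → (x * y) • m ∈ P →
        x • m ∈ P ∨ ∃ n : ℕ, 0 < n ∧ y ^ n • m ∈ P

/-- `P` is a graded classical `S`-primary submodule of `M`;
this includes the requirement `(P :_R M) ∩ S = ∅`. -/
def IsGrClSPrimary (S : Submonoid R) (P : Submodule R M) : Prop :=
  IsGradedSubmodule ℳ P ∧ Disjoint ((P.colon ⊤ : Ideal R) : Set R) (S : Set R) ∧
    ∃ s ∈ S, ∀ x y : R, ∀ m : M, SetLike.IsHomogeneousElem 𝒜 x → SetLike.IsHomogeneousElem 𝒜 y →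
      SetLike.IsHomogeneousElem ℳ m → (x * y) • m ∈ P →
        (s * x) • m ∈ P ∨ ∃ n : ℕ, 0 < n ∧ (s * y ^ n) • m ∈ P

/-- if `S₁ ⊆ S₂`, every `s ∈ S₂` admits `r ∈ S₂` with `sr ∈ S₁`, and `P` is
graded classical `S₂`-primary with `(P :_R M) ∩ S₂ = ∅`, then `P` is graded classical
`S₁`-primary. -/
theorem isGrClSPrimary_of_sat (S₁ S₂ : Submonoid R) (h12 : S₁ ≤ S₂)
    (hS₁ : (S₁ : Set R) ⊆ {r | SetLike.IsHomogeneousElem 𝒜 r})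
    (hS₂ : (S₂ : Set R) ⊆ {r | SetLike.IsHomogeneousElem 𝒜 r})
    (hsat : ∀ s ∈ S₂, ∃ r ∈ S₂, s * r ∈ S₁)
    (P : Submodule R M)
    (hdisj : Disjoint ((P.colon ⊤ : Ideal R) : Set R) (S₂ : Set R))
    (hP : IsGrClSPrimary 𝒜 ℳ S₂ P) : IsGrClSPrimary 𝒜 ℳ S₁ P := by
  obtain ⟨hgr, -, s, hs, hmain⟩ := hP
  obtain ⟨r, hr, hsr⟩ := hsat s hs
  refine ⟨hgr, hdisj.mono_right (by exact_mod_cast h12), s * r, hsr, ?_⟩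
  intro x y m hx hy hm hxy
  rcases hmain x y m hx hy hm hxy with h | ⟨n, hn, h⟩
  · left
    have := P.smul_mem r h
    rwa [← mul_smul, show r * (s * x) = s * r * x by ring] at this
  · right
    refine ⟨n, hn, ?_⟩
    have := P.smul_mem r h
    rwa [← mul_smul, show r * (s * y ^ n) = s * r * y ^ n by ring] at this
end

section
/- Let f : M₁ → M₂ be a surjective graded R-module homomorphism and P a graded classical S-primary submodule of M₁ with ker(f) ⊆ P. Then f(P) is a graded classical S-primary submodule of M₂. -/
variable {G : Type*} [AddCommGroup G] [DecidableEq G]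
variable {R : Type*} [CommRing R] (𝒜 : G → AddSubmonoid R) [GradedRing 𝒜]
variable {M : Type*} [AddCommGroup M] [Module R M]
variable (ℳ : G → AddSubmonoid M) [SetLike.GradedSMul 𝒜 ℳ] [DirectSum.Decomposition ℳ]

lemma decompose_map_apply {M₂ : Type*} [AddCommGroup M₂] [Module R M₂]
    (ℳ₂ : G → AddSubmonoid M₂) [SetLike.GradedSMul 𝒜 ℳ₂] [DirectSum.Decomposition ℳ₂]
    (f : M →ₗ[R] M₂) (hgr : ∀ g : G, ∀ m ∈ ℳ g, f m ∈ ℳ₂ g)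
    (m : M) (g : G) :
    (DirectSum.decompose ℳ₂ (f m) g : M₂) = f (DirectSum.decompose ℳ m g) := by
  induction m using DirectSum.Decomposition.inductionOn ℳ with
  | zero => simp
  | @homogeneous i m =>
    rcases eq_or_ne i g with rfl | hne
    · rw [DirectSum.decompose_of_mem_same ℳ m.2,
        DirectSum.decompose_of_mem_same ℳ₂ (hgr i m m.2)]
    · rw [DirectSum.decompose_of_mem_ne ℳ m.2 hne,
        DirectSum.decompose_of_mem_ne ℳ₂ (hgr i m m.2) hne, map_zero]
  | add m m' hm hm' =>
    rw [map_add, DirectSum.decompose_add, DirectSum.decompose_add,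
      DirectSum.add_apply, DirectSum.add_apply]
    push_cast
    rw [hm, hm', map_add]

/-- the image of a graded classical `S`-primary submodule containing the kernel,
under a surjective graded homomorphism, is graded classical `S`-primary. -/
theorem map_isGrClSPrimary {M₂ : Type*} [AddCommGroup M₂] [Module R M₂]
    (ℳ₂ : G → AddSubmonoid M₂) [SetLike.GradedSMul 𝒜 ℳ₂] [DirectSum.Decomposition ℳ₂]
    (S : Submonoid R) (hS : (S : Set R) ⊆ {r | SetLike.IsHomogeneousElem 𝒜 r})
    (f : M →ₗ[R] M₂) (hf : Function.Surjective f)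
    (hgr : ∀ g : G, ∀ m ∈ ℳ g, f m ∈ ℳ₂ g)
    (P : Submodule R M) (hP : IsGrClSPrimary 𝒜 ℳ S P)
    (hker : LinearMap.ker f ≤ P) :
    IsGrClSPrimary 𝒜 ℳ₂ S (P.map f) := by
  obtain ⟨hPgr, hPdisj, s, hsS, hs⟩ := hP
  have hmem : ∀ m : M, f m ∈ P.map f → m ∈ P := by
    intro m hm
    obtain ⟨p, hp, hfp⟩ := hm
    have : m - p ∈ LinearMap.ker f := by
      simp [LinearMap.mem_ker, map_sub, hfp]
    have := hker this
    simpa using P.add_mem this hp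
  refine ⟨?_, ?_, s, hsS, ?_⟩
  · rintro m₂ ⟨m, hm, rfl⟩ g
    rw [decompose_map_apply 𝒜 ℳ ℳ₂ f hgr]
    exact ⟨_, hPgr m hm g, rfl⟩
  · refine Set.disjoint_left.2 fun r hr hrS => ?_
    refine Set.disjoint_left.1 hPdisj ?_ hrS
    have hr' : r ∈ (P.map f).colon ⊤ := hr
    rw [SetLike.mem_coe, Submodule.mem_colon] at *
    intro m _
    apply hmem
    have := hr' (f m) trivial
    simpa [map_smul] using this
  · rintro x y m₂ hx hy ⟨g, hm₂⟩ hxy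
    obtain ⟨m', rfl⟩ := hf m₂
    set m : M := (DirectSum.decompose ℳ m' g : M) with hmdef
    have hfm : f m = f m' := by
      rw [← decompose_map_apply 𝒜 ℳ ℳ₂ f hgr,
        DirectSum.decompose_of_mem_same ℳ₂ hm₂]
    have hmP : (x * y) • m ∈ P := by
      apply hmem
      rw [map_smul, hfm]
      exact hxy
    rcases hs x y m hx hy ⟨g, (DirectSum.decompose ℳ m' g).2⟩ hmP with h | ⟨n, hn, h⟩
    · left
      rw [← hfm, ← map_smul]
      exact ⟨_, h, rfl⟩
    · right
      exact ⟨n, hn, by rw [← hfm, ← map_smul]; exact ⟨_, h, rfl⟩⟩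
end

section
/- Let f : M₁ → M₂ be a surjective graded R-module homomorphism and I a graded classical S-primary submodule of M₂. Then f⁻¹(I) is a graded classical S-primary submodule of M₁. -/
variable {G : Type*} [AddCommGroup G] [DecidableEq G]
variable {R : Type*} [CommRing R] (𝒜 : G → AddSubmonoid R) [GradedRing 𝒜]
variable {M : Type*} [AddCommGroup M] [Module R M]
variable (ℳ : G → AddSubmonoid M) [SetLike.GradedSMul 𝒜 ℳ] [DirectSum.Decomposition ℳ]

set_option synthInstance.maxHeartbeats 1000000 in
set_option maxHeartbeats 1000000 in
lemma decompose_map_aux {M₂ : Type*} [AddCommGroup M₂] [Module R M₂]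
    (ℳ₂ : G → AddSubmonoid M₂) [DirectSum.Decomposition ℳ₂]
    (f : M →ₗ[R] M₂) (hgr : ∀ g : G, ∀ m ∈ ℳ g, f m ∈ ℳ₂ g) (m : M) (g : G) :
    f (DirectSum.decompose ℳ m g : M) = (DirectSum.decompose ℳ₂ (f m) g : M₂) := by
  induction m using DirectSum.Decomposition.inductionOn ℳ with
  | zero => simp
  | @homogeneous i x =>
    by_cases h : i = g
    · subst h
      rw [DirectSum.decompose_of_mem_same ℳ x.2,
        DirectSum.decompose_of_mem_same ℳ₂ (hgr i x x.2)]
    · rw [DirectSum.decompose_of_mem_ne ℳ x.2 h,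
        DirectSum.decompose_of_mem_ne ℳ₂ (hgr i x x.2) h, map_zero]
  | add x y hx hy =>
    simp only [map_add, DirectSum.decompose_add, DirectSum.add_apply,
      AddSubmonoid.coe_add, hx, hy]

/-- the preimage of a graded classical `S`-primary submodule under a surjective
graded homomorphism is graded classical `S`-primary. -/
theorem comap_isGrClSPrimary {M₂ : Type*} [AddCommGroup M₂] [Module R M₂]
    (ℳ₂ : G → AddSubmonoid M₂) [SetLike.GradedSMul 𝒜 ℳ₂] [DirectSum.Decomposition ℳ₂]
    (S : Submonoid R) (hS : (S : Set R) ⊆ {r | SetLike.IsHomogeneousElem 𝒜 r})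
    (f : M →ₗ[R] M₂) (hf : Function.Surjective f)
    (hgr : ∀ g : G, ∀ m ∈ ℳ g, f m ∈ ℳ₂ g)
    (I : Submodule R M₂) (hI : IsGrClSPrimary 𝒜 ℳ₂ S I) :
    IsGrClSPrimary 𝒜 ℳ S (I.comap f) := by
  obtain ⟨hIgr, hIdisj, s, hsS, hs⟩ := hI
  refine ⟨?_, ?_, s, hsS, ?_⟩
  · intro m hm g
    simp only [Submodule.mem_comap] at hm ⊢
    rw [decompose_map_aux ℳ ℳ₂ f hgr]
    exact hIgr _ hm g
  · rw [Set.disjoint_left] at hIdisj ⊢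
    intro r hr hrS
    refine hIdisj ?_ hrS
    rw [SetLike.mem_coe, Submodule.mem_colon] at hr ⊢
    intro p _
    obtain ⟨q, rfl⟩ := hf p
    have := hr q trivial
    simpa [Submodule.mem_comap] using this
  · intro x y m hx hy hm hxy
    obtain ⟨g, hmg⟩ := hm
    have hfm : SetLike.IsHomogeneousElem ℳ₂ (f m) := ⟨g, hgr g m hmg⟩
    have h1 : (x * y) • f m ∈ I := by
      simpa [Submodule.mem_comap, map_smul] using hxy
    rcases hs x y (f m) hx hy hfm h1 with h | ⟨n, hn, h⟩
    · left; simpa [Submodule.mem_comap, map_smul] using h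
    · right; exact ⟨n, hn, by simpa [Submodule.mem_comap, map_smul] using h⟩
end

section
/- Let R = R₁ × R₂ with the product grading, S = S₁ × S₂, and P = P₁ × P₂ a graded ideal of R with P ∩ S = ∅. Then P is a graded classical S-primary ideal of R if and only if either P₁ is a graded classical S₁-primary ideal of R₁ and P₂ ∩ S₂ ≠ ∅, or P₂ is a graded classical S₂-primary ideal of R₂ and P₁ ∩ S₁ ≠ ∅. -/
/-- `Q` is a classical `S`-primary ideal relative to the set `hA` of homogeneous elements;
this includes `Q ∩ S = ∅`. -/
def IsClSPrimaryIdealOn {A : Type*} [CommRing A] (hA : Set A) (S : Submonoid A)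
    (Q : Ideal A) : Prop :=
  Disjoint (Q : Set A) (S : Set A) ∧
    ∃ s ∈ S, ∀ x ∈ hA, ∀ y ∈ hA, x * y ∈ Q →
      s * x ∈ Q ∨ ∃ n : ℕ, 0 < n ∧ s * y ^ n ∈ Q

variable {G : Type*} [AddCommGroup G] [DecidableEq G]
variable {R₁ : Type*} [CommRing R₁] (𝒜₁ : G → AddSubmonoid R₁) [GradedRing 𝒜₁]
variable {R₂ : Type*} [CommRing R₂] (𝒜₂ : G → AddSubmonoid R₂) [GradedRing 𝒜₂]

private lemma memProd' {A B : Type*} [CommRing A] [CommRing B] (I : Ideal A) (J : Ideal B)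
    {x : A × B} : x ∈ I.prod J ↔ x.1 ∈ I ∧ x.2 ∈ J := by
  cases x; exact Ideal.mem_prod I J

/-- for the product grading on `R₁ × R₂`, with `S = S₁ × S₂` and the graded ideal
`P = P₁ × P₂` satisfying `P ∩ S = ∅`, `P` is a graded classical `S`-primary ideal of `R₁ × R₂`
iff `P₁` is a graded classical `S₁`-primary ideal of `R₁` and `P₂ ∩ S₂ ≠ ∅`, or `P₂` is a graded
classical `S₂`-primary ideal of `R₂` and `P₁ ∩ S₁ ≠ ∅`. -/
theorem prod_isClSPrimaryIdeal_iff (S₁ : Submonoid R₁) (S₂ : Submonoid R₂)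
    (hS₁ : (S₁ : Set R₁) ⊆ {r | SetLike.IsHomogeneousElem 𝒜₁ r})
    (hS₂ : (S₂ : Set R₂) ⊆ {r | SetLike.IsHomogeneousElem 𝒜₂ r})
    (P₁ : Ideal R₁) (P₂ : Ideal R₂)
    (hP₁ : P₁.IsHomogeneous 𝒜₁) (hP₂ : P₂.IsHomogeneous 𝒜₂)
    (hdisj : Disjoint ((P₁.prod P₂ : Ideal (R₁ × R₂)) : Set (R₁ × R₂))
      ((S₁.prod S₂ : Submonoid (R₁ × R₂)) : Set (R₁ × R₂))) :
    IsClSPrimaryIdealOn {p : R₁ × R₂ | ∃ g : G, p.1 ∈ 𝒜₁ g ∧ p.2 ∈ 𝒜₂ g}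
        (S₁.prod S₂) (P₁.prod P₂) ↔
      (IsClSPrimaryIdealOn {r | SetLike.IsHomogeneousElem 𝒜₁ r} S₁ P₁ ∧
          ((P₂ : Set R₂) ∩ (S₂ : Set R₂)).Nonempty) ∨
      (IsClSPrimaryIdealOn {r | SetLike.IsHomogeneousElem 𝒜₂ r} S₂ P₂ ∧
          ((P₁ : Set R₁) ∩ (S₁ : Set R₁)).Nonempty) := by
  constructor
  · rintro ⟨-, s, hsS, hs⟩
    obtain ⟨hs1, hs2⟩ := Submonoid.mem_prod.mp hsS
    have h1 : ((1 : R₁), (0 : R₂)) ∈ {p : R₁ × R₂ | ∃ g : G, p.1 ∈ 𝒜₁ g ∧ p.2 ∈ 𝒜₂ g} :=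
      ⟨0, SetLike.GradedOne.one_mem, (𝒜₂ 0).zero_mem⟩
    have h2 : ((0 : R₁), (1 : R₂)) ∈ {p : R₁ × R₂ | ∃ g : G, p.1 ∈ 𝒜₁ g ∧ p.2 ∈ 𝒜₂ g} :=
      ⟨0, (𝒜₁ 0).zero_mem, SetLike.GradedOne.one_mem⟩
    have hxy : ((1 : R₁), (0 : R₂)) * ((0 : R₁), (1 : R₂)) ∈ P₁.prod P₂ := by
      refine (memProd' P₁ P₂).mpr ⟨?_, ?_⟩ <;> simp
    rcases hs _ h1 _ h2 hxy with h | ⟨n, hn, h⟩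
    · have hsP1 : s.1 ∈ P₁ := by simpa using ((memProd' P₁ P₂).mp h).1
      right
      refine ⟨⟨?_, s.2, hs2, ?_⟩, s.1, hsP1, hs1⟩
      · rw [Set.disjoint_left]
        intro t htP htS
        exact Set.disjoint_left.mp hdisj
          ((memProd' P₁ P₂ (x := (s.1, t))).mpr ⟨hsP1, htP⟩) (Submonoid.mem_prod.mpr ⟨hs1, htS⟩)
      · intro y₁ hy₁ y₂ hy₂ hmul
        obtain ⟨g₁, hg₁⟩ := hy₁
        obtain ⟨g₂, hg₂⟩ := hy₂
        have hmul' : ((0 : R₁), y₁) * ((0 : R₁), y₂) ∈ P₁.prod P₂ :=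
          (memProd' P₁ P₂).mpr ⟨by simp, hmul⟩
        rcases hs ((0 : R₁), y₁) ⟨g₁, (𝒜₁ g₁).zero_mem, hg₁⟩
            ((0 : R₁), y₂) ⟨g₂, (𝒜₁ g₂).zero_mem, hg₂⟩ hmul' with h' | ⟨m, hm, h'⟩
        · exact Or.inl ((memProd' P₁ P₂).mp h').2
        · exact Or.inr ⟨m, hm, by simpa using ((memProd' P₁ P₂).mp h').2⟩
    · have hsP2 : s.2 ∈ P₂ := by
        have := ((memProd' P₁ P₂).mp h).2
        simpa using this
      left
      refine ⟨⟨?_, s.1, hs1, ?_⟩, s.2, hsP2, hs2⟩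
      · rw [Set.disjoint_left]
        intro t htP htS
        exact Set.disjoint_left.mp hdisj
          ((memProd' P₁ P₂ (x := (t, s.2))).mpr ⟨htP, hsP2⟩) (Submonoid.mem_prod.mpr ⟨htS, hs2⟩)
      · intro y₁ hy₁ y₂ hy₂ hmul
        obtain ⟨g₁, hg₁⟩ := hy₁
        obtain ⟨g₂, hg₂⟩ := hy₂
        have hmul' : (y₁, (0 : R₂)) * (y₂, (0 : R₂)) ∈ P₁.prod P₂ :=
          (memProd' P₁ P₂).mpr ⟨hmul, by simp⟩
        rcases hs (y₁, (0 : R₂)) ⟨g₁, hg₁, (𝒜₂ g₁).zero_mem⟩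
            (y₂, (0 : R₂)) ⟨g₂, hg₂, (𝒜₂ g₂).zero_mem⟩ hmul' with h' | ⟨m, hm, h'⟩
        · exact Or.inl ((memProd' P₁ P₂).mp h').1
        · exact Or.inr ⟨m, hm, by simpa using ((memProd' P₁ P₂).mp h').1⟩
  · rintro (⟨⟨hd1, s₁, hs₁S, hs₁⟩, t, htP, htS⟩ | ⟨⟨hd2, s₂, hs₂S, hs₂⟩, t, htP, htS⟩)
    · refine ⟨hdisj, (s₁, t), Submonoid.mem_prod.mpr ⟨hs₁S, htS⟩, ?_⟩
      rintro ⟨x₁, x₂⟩ ⟨g, hx₁, hx₂⟩ ⟨y₁, y₂⟩ ⟨g', hy₁, hy₂⟩ hxy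
      rcases hs₁ x₁ ⟨g, hx₁⟩ y₁ ⟨g', hy₁⟩ ((memProd' P₁ P₂).mp hxy).1 with h | ⟨n, hn, h⟩
      · exact Or.inl ((memProd' P₁ P₂).mpr ⟨h, Ideal.mul_mem_right _ _ htP⟩)
      · exact Or.inr ⟨n, hn, (memProd' P₁ P₂).mpr ⟨by simpa using h,
          by simpa using Ideal.mul_mem_right (y₂ ^ n) _ htP⟩⟩
    · refine ⟨hdisj, (t, s₂), Submonoid.mem_prod.mpr ⟨htS, hs₂S⟩, ?_⟩
      rintro ⟨x₁, x₂⟩ ⟨g, hx₁, hx₂⟩ ⟨y₁, y₂⟩ ⟨g', hy₁, hy₂⟩ hxy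
      rcases hs₂ x₂ ⟨g, hx₂⟩ y₂ ⟨g', hy₂⟩ ((memProd' P₁ P₂).mp hxy).2 with h | ⟨n, hn, h⟩
      · exact Or.inl ((memProd' P₁ P₂).mpr ⟨Ideal.mul_mem_right _ _ htP, h⟩)
      · exact Or.inr ⟨n, hn, (memProd' P₁ P₂).mpr
          ⟨by simpa using Ideal.mul_mem_right (y₁ ^ n) _ htP, by simpa using h⟩⟩
end

section
/- If M is a graded multiplication R-module and (P :_R M) is a graded classical S-primary ideal of R, then P is a graded classical S-primary submodule of M. -/
variable {G : Type*} [AddCommGroup G] [DecidableEq G]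
variable {R : Type*} [CommRing R] (𝒜 : G → AddSubmonoid R) [GradedRing 𝒜]
variable {M : Type*} [AddCommGroup M] [Module R M]
variable (ℳ : G → AddSubmonoid M) [SetLike.GradedSMul 𝒜 ℳ] [DirectSum.Decomposition ℳ]

/-- `Q` is a graded classical `S`-primary ideal of `R`; this includes `Q ∩ S = ∅`. -/
def IsGrClSPrimaryIdeal (S : Submonoid R) (Q : Ideal R) : Prop :=
  Q.IsHomogeneous 𝒜 ∧ Disjoint (Q : Set R) (S : Set R) ∧
    ∃ s ∈ S, ∀ x y : R, SetLike.IsHomogeneousElem 𝒜 x → SetLike.IsHomogeneousElem 𝒜 y →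
      x * y ∈ Q → s * x ∈ Q ∨ ∃ n : ℕ, 0 < n ∧ s * y ^ n ∈ Q

lemma aux_comp_mem {N : Submodule R M} {z : M} (hz : SetLike.IsHomogeneousElem ℳ z)
    (hzN : z ∈ N) (g : G) : (DirectSum.decompose ℳ z g : M) ∈ N := by
  obtain ⟨i, hi⟩ := hz
  rcases eq_or_ne g i with rfl | h
  · rw [DirectSum.decompose_of_mem_same ℳ hi]; exact hzN
  · rw [DirectSum.decompose_of_mem_ne ℳ hi h.symm]; exact N.zero_mem

include 𝒜 in
lemma aux_span_graded (m : M) (hm : SetLike.IsHomogeneousElem ℳ m) :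
    ∀ z ∈ Submodule.span R {m}, ∀ g : G,
      (DirectSum.decompose ℳ z g : M) ∈ Submodule.span R {m} := by
  intro z hz g
  obtain ⟨r, rfl⟩ := Submodule.mem_span_singleton.mp hz
  classical
  obtain ⟨d, hd⟩ := hm
  rw [← DirectSum.sum_support_decompose 𝒜 r, Finset.sum_smul, DirectSum.decompose_sum]
  rw [DFinsupp.finset_sum_apply, AddSubmonoid.coe_finset_sum]
  refine Submodule.sum_mem _ fun i _ => ?_
  exact aux_comp_mem ℳ ⟨i +ᵥ d, SetLike.GradedSMul.smul_mem (SetLike.coe_mem _) hd⟩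
    (Submodule.smul_mem _ _ (Submodule.mem_span_singleton_self m)) g

lemma aux_decompose_mul_left {a b : R} {i : G} (ha : a ∈ 𝒜 i) (g : G) :
    (DirectSum.decompose 𝒜 (a * b) (i + g) : R) = a * DirectSum.decompose 𝒜 b g := by
  lift a to 𝒜 i using ha
  rw [DirectSum.decompose_mul, DirectSum.decompose_coe, DirectSum.coe_of_mul_apply_add]

/-- if `M` is a graded multiplication module and `(P :_R M)` is a graded
classical `S`-primary ideal of `R`, then `P` is a graded classical `S`-primary submodule. -/
theorem isGrClSPrimary_of_multiplication (S : Submonoid R)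
    (hS : (S : Set R) ⊆ {r | SetLike.IsHomogeneousElem 𝒜 r}) (P : Submodule R M)
    (hgr : IsGradedSubmodule ℳ P)
    (hdisj : Disjoint ((P.colon ⊤ : Ideal R) : Set R) (S : Set R))
    (hmul : ∀ Q : Submodule R M, IsGradedSubmodule ℳ Q →
      Q = (Q.colon ⊤) • (⊤ : Submodule R M))
    (hcolon : IsGrClSPrimaryIdeal 𝒜 S (P.colon ⊤)) :
    IsGrClSPrimary 𝒜 ℳ S P := by
  obtain ⟨hQgr, hQdisj, s, hsS, hprim⟩ := hcolon
  refine ⟨hgr, hdisj, s, hsS, ?_⟩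
  intro x y m hx hy hm hxym
  classical
  have hN := hmul (Submodule.span R {m}) (aux_span_graded 𝒜 ℳ m hm)
  have h3 : ∀ t ∈ (Submodule.span R {m}).colon ⊤, x * y * t ∈ P.colon ⊤ := by
    intro t ht
    rw [Submodule.mem_colon]
    intro u _
    obtain ⟨r, hr⟩ := Submodule.mem_span_singleton.mp
      (Submodule.mem_colon.mp ht u trivial)
    have e : (x * y * t) • u = r • ((x * y) • m) := by
      calc (x * y * t) • u = (x * y) • (t • u) := by rw [mul_smul]
        _ = (x * y) • (r • m) := by rw [← hr]
        _ = r • ((x * y) • m) := smul_comm _ _ _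
    rw [e]
    exact P.smul_mem r hxym
  by_cases hcase : ∃ n : ℕ, 0 < n ∧ s * y ^ n ∈ P.colon ⊤
  · right
    obtain ⟨n, hn, h⟩ := hcase
    exact ⟨n, hn, Submodule.mem_colon.mp h m trivial⟩
  · left
    push_neg at hcase
    obtain ⟨i, hxyi⟩ := SetLike.IsHomogeneousElem.mul hx hy
    have key : ∀ t ∈ (Submodule.span R {m}).colon ⊤, s * x * t ∈ P.colon ⊤ := by
      intro t ht
      rw [← DirectSum.sum_support_decompose 𝒜 t, Finset.mul_sum]
      refine Ideal.sum_mem _ fun g _ => ?_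
      have hcomp : x * y * (DirectSum.decompose 𝒜 t g : R) ∈ P.colon ⊤ := by
        have h4 := hQgr (i + g) (h3 t ht)
        rwa [aux_decompose_mul_left 𝒜 hxyi g] at h4
      have htg : SetLike.IsHomogeneousElem 𝒜 (DirectSum.decompose 𝒜 t g : R) :=
        ⟨g, SetLike.coe_mem _⟩
      rcases hprim (x * (DirectSum.decompose 𝒜 t g : R)) y
          (SetLike.IsHomogeneousElem.mul hx htg) hy
          (by rw [mul_right_comm]; exact hcomp) with h5 | ⟨n, hn, h5⟩
      · rwa [← mul_assoc] at h5
      · exact absurd h5 (hcase n hn)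
    have hmN : m ∈ (Submodule.span R {m}).colon ⊤ • (⊤ : Submodule R M) :=
      hN ▸ Submodule.mem_span_singleton_self m
    refine Submodule.smul_induction_on hmN (fun r hr u _ => ?_) (fun a b ha hb => ?_)
    · rw [smul_smul]
      exact Submodule.mem_colon.mp (key r hr) u trivial
    · rw [smul_add]; exact P.add_mem ha hb
end

section
/- If P is a graded classical S-primary submodule of M and I is a graded submodule of M with (I :_R M) ∩ S ≠ ∅ and (P ∩ I :_R M) ∩ S = ∅, then P ∩ I is a graded classical S-primary submodule of M. -/
variable {G : Type*} [AddCommGroup G] [DecidableEq G]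
variable {R : Type*} [CommRing R] (𝒜 : G → AddSubmonoid R) [GradedRing 𝒜]
variable {M : Type*} [AddCommGroup M] [Module R M]
variable (ℳ : G → AddSubmonoid M) [SetLike.GradedSMul 𝒜 ℳ] [DirectSum.Decomposition ℳ]

/-- if `P` is graded classical `S`-primary, `I` is a graded submodule with
`(I :_R M) ∩ S ≠ ∅` and `(P ∩ I :_R M) ∩ S = ∅`, then `P ∩ I` is graded classical
`S`-primary. -/
theorem inf_isGrClSPrimary (S : Submonoid R)
    (hS : (S : Set R) ⊆ {r | SetLike.IsHomogeneousElem 𝒜 r}) (P I : Submodule R M)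
    (hgrI : IsGradedSubmodule ℳ I)
    (hP : IsGrClSPrimary 𝒜 ℳ S P)
    (hI : (((I.colon ⊤ : Ideal R) : Set R) ∩ (S : Set R)).Nonempty)
    (hdisj : Disjoint (((P ⊓ I).colon ⊤ : Ideal R) : Set R) (S : Set R)) :
    IsGrClSPrimary 𝒜 ℳ S (P ⊓ I) := by
  obtain ⟨hgrP, _, s, hsS, hprim⟩ := hP
  obtain ⟨t, htI, htS⟩ := hI
  have htm : ∀ m : M, t • m ∈ I := fun m => Submodule.mem_colon.mp htI m trivial
  refine ⟨fun m hm g => ⟨hgrP m hm.1 g, hgrI m hm.2 g⟩, hdisj,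
    t * s, S.mul_mem htS hsS, ?_⟩
  intro x y m hx hy hm hxy
  rcases hprim x y m hx hy hm hxy.1 with h | ⟨n, hn, h⟩
  · left
    refine ⟨?_, ?_⟩
    · rw [mul_assoc, ← smul_smul]; exact P.smul_mem t h
    · rw [mul_assoc, ← smul_smul]; exact htm _
  · right
    refine ⟨n, hn, ?_, ?_⟩
    · rw [mul_assoc, ← smul_smul]; exact P.smul_mem t h
    · rw [mul_assoc, ← smul_smul]; exact htm _
end

section
/- If R is a Noetherian ring, then every irreducible graded submodule P of M with (P :_R M) ∩ S = ∅ is a graded classical S-primary submodule of M. -/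
variable {G : Type*} [AddCommGroup G] [DecidableEq G]
variable {R : Type*} [CommRing R] (𝒜 : G → AddSubmonoid R) [GradedRing 𝒜]
variable {M : Type*} [AddCommGroup M] [Module R M]
variable (ℳ : G → AddSubmonoid M) [SetLike.GradedSMul 𝒜 ℳ] [DirectSum.Decomposition ℳ]

/-- if `R` is Noetherian, every irreducible graded submodule `P` of `M` with
`(P :_R M) ∩ S = ∅` is a graded classical `S`-primary submodule of `M`. -/
theorem irreducible_isGrClSPrimary [IsNoetherianRing R] (S : Submonoid R)
    (hS : (S : Set R) ⊆ {r | SetLike.IsHomogeneousElem 𝒜 r}) (P : Submodule R M)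
    (hgr : IsGradedSubmodule ℳ P)
    (hne : P ≠ ⊤)
    (hirr : ∀ A B : Submodule R M, P = A ⊓ B → P = A ∨ P = B)
    (hdisj : Disjoint ((P.colon ⊤ : Ideal R) : Set R) (S : Set R)) :
    IsGrClSPrimary 𝒜 ℳ S P := by
  refine ⟨hgr, hdisj, 1, S.one_mem, ?_⟩
  intro x y m hx hy hm hxy
  simp only [one_mul]
  by_cases hpow : ∃ n : ℕ, 0 < n ∧ y ^ n • m ∈ P
  · exact Or.inr hpow
  push_neg at hpow
  left
  -- the ascending chain of ideals (P : yⁿ m)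
  have hmono : Monotone fun n : ℕ => P.comap (LinearMap.toSpanSingleton R M (y ^ n • m)) := by
    intro a b hab
    induction b with
    | zero => obtain rfl := Nat.le_zero.mp hab; exact le_refl _
    | succ b ih =>
        rcases Nat.lt_or_ge a (b + 1) with h | h
        · refine le_trans (ih (Nat.lt_succ_iff.mp h)) ?_
          intro r hr
          simp only [Submodule.mem_comap, LinearMap.toSpanSingleton_apply] at hr ⊢
          rw [show y ^ (b + 1) = y * y ^ b from by ring, mul_smul, smul_comm r y]
          exact P.smul_mem y hr
        · have : a = b + 1 := le_antisymm hab h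
          subst this; exact le_refl _
  obtain ⟨N, hN⟩ := monotone_stabilizes_iff_noetherian.mpr (inferInstance : IsNoetherian R R)
    (⟨fun n : ℕ => P.comap (LinearMap.toSpanSingleton R M (y ^ n • m)), hmono⟩ : ℕ →o Ideal R)
  set A := P ⊔ Submodule.span R {x • m} with hA
  set B := P ⊔ Submodule.span R {y ^ (N + 1) • m} with hB
  have hPAB : P = A ⊓ B := by
    refine le_antisymm (le_inf le_sup_left le_sup_left) ?_
    intro u hu
    rw [Submodule.mem_inf] at hu
    obtain ⟨huA, huB⟩ := hu
    rw [hA, Submodule.mem_sup] at huA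
    rw [hB, Submodule.mem_sup] at huB
    obtain ⟨p₁, hp₁, z₁, hz₁, hu₁⟩ := huA
    obtain ⟨p₂, hp₂, z₂, hz₂, hu₂⟩ := huB
    rw [Submodule.mem_span_singleton] at hz₁ hz₂
    obtain ⟨a, rfl⟩ := hz₁
    obtain ⟨b, rfl⟩ := hz₂
    -- show b • y^(N+2) • m ∈ P
    have key : b • (y ^ (N + 2) • m) ∈ P := by
      have h1 : y • (b • y ^ (N + 1) • m) = y • u - y • p₂ := by
        rw [← hu₂, smul_add]; abel
      have h2 : y • u = y • p₁ + a • ((x * y) • m) := by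
        rw [← hu₁, smul_add, smul_comm y a, smul_smul y x, mul_comm y x]
      have h3 : y • (b • y ^ (N + 1) • m) ∈ P := by
        rw [h1, h2]
        exact P.sub_mem (P.add_mem (P.smul_mem y hp₁) (P.smul_mem a hxy)) (P.smul_mem y hp₂)
      rw [smul_comm y b, smul_comm y (y ^ (N + 1)), smul_smul (y ^ (N + 1)) y,
        show y ^ (N + 1) * y = y ^ (N + 2) from by ring] at h3
      exact h3
    have hb1 : b ∈ P.comap (LinearMap.toSpanSingleton R M (y ^ (N + 2) • m)) := by
      simpa [LinearMap.toSpanSingleton_apply] using key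
    have heq : P.comap (LinearMap.toSpanSingleton R M (y ^ (N + 2) • m))
        = P.comap (LinearMap.toSpanSingleton R M (y ^ (N + 1) • m)) := by
      have e1 := hN (N + 2) (by omega)
      have e2 := hN (N + 1) (by omega)
      simp only [OrderHom.coe_mk] at e1 e2
      rw [← e1, e2]
    rw [heq] at hb1
    simp only [Submodule.mem_comap, LinearMap.toSpanSingleton_apply] at hb1
    rw [← hu₂]
    exact P.add_mem hp₂ hb1
  rcases hirr A B hPAB with h | h
  · have : x • m ∈ A := Submodule.mem_sup_right (Submodule.mem_span_singleton_self _)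
    rwa [← h] at this
  · exfalso
    have : y ^ (N + 1) • m ∈ B := Submodule.mem_sup_right (Submodule.mem_span_singleton_self _)
    rw [← h] at this
    exact hpow (N + 1) (Nat.succ_pos N) this
end
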